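/- Let k ≥ 3, let N be a prime with N > k, and let ν : ZMod N → ℝ with ν ≥ 0. (i) If ν satisfies the (m₀,t₀,L₀)-linear forms condition with error ε ≤ 1, then the function ν_{1/2} := (ν+1)/2 also satisfies the (m₀,t₀,L₀)-linear forms condition with error ε. (ii) If in addition ν satisfies the m₀-correlation condition with moment bounds (M_q), then ν_{1/2} satisfies the m₀-correlation condition with moment bounds (M'_q), where each M'_q depends only on q, m₀ and the original bounds (M_q). -/

import Mathlib

open Finset

/-- The average of `f` over `ZMod N`. -/
noncomputable def avgZ (N : ℕ) [NeZero N] (f : ZMod N → ℝ) : ℝ :=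
  (∑ x : ZMod N, f x) / (N : ℝ)

/-- The Gowers inner product of a `{0,1}^d`-tuple of functions on `ZMod N`. -/
noncomputable def gowersInner (N : ℕ) [NeZero N] (d : ℕ)
    (f : (Fin d → Bool) → ZMod N → ℝ) : ℝ :=
  (∑ x : ZMod N, ∑ h : Fin d → ZMod N,
    ∏ ω : Fin d → Bool, f ω (x + ∑ i : Fin d, if ω i then h i else 0)) / (N : ℝ) ^ (d + 1)

/-- The Gowers uniformity norm `‖f‖_{U^d}`. -/
noncomputable def gowersNorm (N : ℕ) [NeZero N] (d : ℕ) (f : ZMod N → ℝ) : ℝ :=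
  (gowersInner N d fun _ => f) ^ ((1 : ℝ) / 2 ^ d)

/-- The `(m₀,t₀,L₀)`-linear forms condition with error `ε`. -/
def LinearFormsCondition (N : ℕ) [Fact (Nat.Prime N)] (ν : ZMod N → ℝ)
    (m₀ t₀ L₀ : ℕ) (ε : ℝ) : Prop :=
  ∀ (m t : ℕ), 1 ≤ m → m ≤ m₀ → 1 ≤ t → t ≤ t₀ →
    ∀ (L : Fin m → Fin t → ℚ) (b : Fin m → ZMod N),
      (∀ i j, (L i j).num.natAbs ≤ L₀ ∧ (L i j).den ≤ L₀) →
      (∀ i, L i ≠ 0) →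
      (∀ i i', i ≠ i' → ¬ ∃ q : ℚ, L i = q • L i') →
      |(∑ x : Fin t → ZMod N, ∏ i : Fin m,
          ν (∑ j : Fin t, (L i j : ZMod N) * x j + b i)) / (N : ℝ) ^ t - 1| ≤ ε

/-- The `m₀`-correlation condition with moment bounds `M`. -/
def CorrelationCondition (N : ℕ) [NeZero N] (ν : ZMod N → ℝ) (m₀ : ℕ) (M : ℕ → ℝ) : Prop :=
  ∀ m : ℕ, 1 < m → m ≤ m₀ →
    ∃ τ : ZMod N → ℝ, (∀ x, 0 ≤ τ x) ∧
      (∀ q : ℕ, 1 ≤ q → avgZ N (fun x => τ x ^ q) ≤ M q) ∧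
      ∀ h : Fin m → ZMod N,
        avgZ N (fun x => ∏ i : Fin m, ν (x + h i)) ≤
          ∑ i : Fin m, ∑ j : Fin m, if i < j then τ (h i - h j) else 0

/-- `ν` is `k`-pseudorandom with error `ε` and moment bounds `M`. -/
def Pseudorandom (N : ℕ) [Fact (Nat.Prime N)] (k : ℕ) (ν : ZMod N → ℝ)
    (ε : ℝ) (M : ℕ → ℝ) : Prop :=
  (∀ x, 0 ≤ ν x) ∧
  LinearFormsCondition N ν (k * 2 ^ (k - 1)) (3 * k - 4) k ε ∧
  CorrelationCondition N ν (2 ^ (k - 1)) M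

/-- The dual function `DF` of `F` (with parameter `k`; uses the `U^{k-1}` box). -/
noncomputable def dualFn (N : ℕ) [NeZero N] (k : ℕ) (F : ZMod N → ℝ) (x : ZMod N) : ℝ :=
  (∑ h : Fin (k - 1) → ZMod N,
    ∏ ω ∈ Finset.univ.filter (fun ω : Fin (k - 1) → Bool => ω ≠ fun _ => false),
      F (x + ∑ i : Fin (k - 1), if ω i then h i else 0)) / (N : ℝ) ^ (k - 1)

/-- The dual norm `‖g‖_{(U^{k-1})^*}`. -/
noncomputable def dualNorm (N : ℕ) [NeZero N] (k : ℕ) (g : ZMod N → ℝ) : ℝ :=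
  sSup {r : ℝ | ∃ f : ZMod N → ℝ, gowersNorm N (k - 1) f ≤ 1 ∧
    r = |avgZ N (fun x => f x * g x)|}


private lemma prod_half_expand (m : ℕ) (f : Fin m → ℝ) :
    ∏ i, (f i + 1) / 2 = (∑ S : Finset (Fin m), ∏ i ∈ S, f i) / 2 ^ m := by
  rw [Finset.prod_div_distrib, Finset.prod_add]
  simp [Finset.powerset_univ, Finset.prod_const]

private lemma avgZ_sum {N : ℕ} [NeZero N] {α : Type*} (s : Finset α) (f : α → ZMod N → ℝ) :
    avgZ N (fun x => ∑ a ∈ s, f a x) = ∑ a ∈ s, avgZ N (f a) := by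
  unfold avgZ; rw [Finset.sum_comm, Finset.sum_div]

private lemma avgZ_div_const {N : ℕ} [NeZero N] (f : ZMod N → ℝ) (c : ℝ) :
    avgZ N (fun x => f x / c) = avgZ N f / c := by
  unfold avgZ; rw [← Finset.sum_div]; ring

private lemma avgZ_const_mul {N : ℕ} [NeZero N] (f : ZMod N → ℝ) (c : ℝ) :
    avgZ N (fun x => c * f x) = c * avgZ N f := by
  unfold avgZ; rw [← Finset.mul_sum, mul_div_assoc]

private lemma avgZ_const {N : ℕ} [NeZero N] (c : ℝ) : avgZ N (fun _ => c) = c := by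
  unfold avgZ
  rw [Finset.sum_const, Finset.card_univ, ZMod.card, nsmul_eq_mul]
  field_simp [NeZero.ne N]

private lemma avgZ_mono {N : ℕ} [NeZero N] {f g : ZMod N → ℝ} (h : ∀ x, f x ≤ g x) :
    avgZ N f ≤ avgZ N g := by
  unfold avgZ
  have hN : (0:ℝ) < N := by exact_mod_cast Nat.pos_of_ne_zero (NeZero.ne N)
  exact (div_le_div_iff_of_pos_right hN).mpr (Finset.sum_le_sum fun x _ => h x)

private lemma avgZ_nonneg {N : ℕ} [NeZero N] {f : ZMod N → ℝ} (h : ∀ x, 0 ≤ f x) :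
    0 ≤ avgZ N f :=
  div_nonneg (Finset.sum_nonneg fun x _ => h x) (Nat.cast_nonneg N)

private lemma avgZ_shift {N : ℕ} [NeZero N] (f : ZMod N → ℝ) (c : ZMod N) :
    avgZ N (fun x => f (x + c)) = avgZ N f := by
  unfold avgZ
  congr 1
  exact Fintype.sum_equiv (Equiv.addRight c) _ _ (fun x => rfl)

private lemma subset_prod_reindex {m : ℕ} (S : Finset (Fin m)) (g : Fin m → ℝ) :
    ∏ i ∈ S, g i = ∏ i : Fin S.card, g (S.orderIsoOfFin rfl i) := by
  rw [← Finset.prod_coe_sort S g]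
  exact (Equiv.prod_comp (S.orderIsoOfFin rfl).toEquiv fun a => g ↑a).symm

set_option maxHeartbeats 1000000 in
/-- Lemma: `(ν + 1)/2` inherits the linear forms condition (with the same error)
and the correlation condition (with new moment bounds depending only on
`m₀`, `q` and the original bounds). -/
theorem half_measure_pseudorandom (m₀ : ℕ) (M : ℕ → ℝ) :
    ∃ M' : ℕ → ℝ,
      ∀ (k t₀ L₀ : ℕ), 3 ≤ k →
        ∀ (N : ℕ) [Fact (Nat.Prime N)], k < N →
          ∀ ν : ZMod N → ℝ, (∀ x, 0 ≤ ν x) →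
            ∀ ε : ℝ, ε ≤ 1 →
              LinearFormsCondition N ν m₀ t₀ L₀ ε →
              (LinearFormsCondition N (fun x => (ν x + 1) / 2) m₀ t₀ L₀ ε ∧
                (CorrelationCondition N ν m₀ M →
                  CorrelationCondition N (fun x => (ν x + 1) / 2) m₀ M')) := by
  refine ⟨fun q => ((m₀:ℝ)+1)^q * ((m₀:ℝ) * M q + (((m₀:ℝ)+1) * max (M 1) 1)^q), ?_⟩
  intro k t₀ L₀ hk N _ hkN ν hν ε hε hLF
  constructor
  · show LinearFormsCondition N (fun x => (ν x + 1) / 2) m₀ t₀ L₀ ε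
    intro m t hm hmm₀ ht htt₀ L b hLb hLne hLprop
    have hε0 : 0 ≤ ε := (abs_nonneg _).trans (hLF m t hm hmm₀ ht htt₀ L b hLb hLne hLprop)
    have hN0 : (0:ℝ) < (N:ℝ) := by
      exact_mod_cast (Fact.out : Nat.Prime N).pos
    have hNt : (0:ℝ) < (N:ℝ)^t := by positivity
    -- per-subset estimate
    have hS : ∀ S : Finset (Fin m),
        |(∑ x : Fin t → ZMod N, ∏ i ∈ S,
            ν (∑ j, (L i j : ZMod N) * x j + b i)) / (N:ℝ)^t - 1| ≤ ε := by
      intro S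
      rcases S.eq_empty_or_nonempty with rfl | hSne
      · have : (∑ x : Fin t → ZMod N, ∏ i ∈ (∅ : Finset (Fin m)),
            ν (∑ j, (L i j : ZMod N) * x j + b i)) = (N:ℝ)^t := by
          simp [Finset.card_univ]
        rw [this, div_self hNt.ne']
        simpa using hε0
      · have hs1 : 1 ≤ S.card := hSne.card_pos
        have hsm : S.card ≤ m := by
          simpa using Finset.card_le_card (Finset.subset_univ S)
        set e := S.orderIsoOfFin rfl with he
        have key := hLF S.card t hs1 (hsm.trans hmm₀) ht htt₀
          (fun i j => L (e i) j) (fun i => b (e i))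
          (fun i j => hLb _ _) (fun i => hLne _)
          (fun i i' hii => hLprop _ _ (fun hco => hii (e.injective (Subtype.ext hco))))
        have hre : ∀ x : Fin t → ZMod N,
            ∏ i ∈ S, ν (∑ j, (L i j : ZMod N) * x j + b i)
              = ∏ i : Fin S.card, ν (∑ j, (L (e i) j : ZMod N) * x j + b (e i)) :=
          fun x => subset_prod_reindex S _
        simpa only [hre] using key
    -- expansion
    have hsum : (∑ x : Fin t → ZMod N, ∏ i : Fin m,
        ((ν (∑ j, (L i j : ZMod N) * x j + b i) + 1) / 2))
        = (∑ S : Finset (Fin m), ∑ x : Fin t → ZMod N,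
            ∏ i ∈ S, ν (∑ j, (L i j : ZMod N) * x j + b i)) / 2 ^ m := by
      simp_rw [prod_half_expand]
      rw [← Finset.sum_div, Finset.sum_comm]
    have key : (∑ x : Fin t → ZMod N, ∏ i : Fin m,
        ((ν (∑ j, (L i j : ZMod N) * x j + b i) + 1) / 2)) / (N:ℝ)^t - 1
        = (∑ S : Finset (Fin m),
            ((∑ x : Fin t → ZMod N, ∏ i ∈ S,
              ν (∑ j, (L i j : ZMod N) * x j + b i)) / (N:ℝ)^t - 1)) / 2 ^ m := by
      rw [hsum, Finset.sum_sub_distrib, ← Finset.sum_div, Finset.sum_const, Finset.card_univ,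
        Fintype.card_finset, Fintype.card_fin]
      push_cast
      field_simp
      ring
    calc |(∑ x : Fin t → ZMod N, ∏ i : Fin m,
        ((ν (∑ j, (L i j : ZMod N) * x j + b i) + 1) / 2)) / (N:ℝ)^t - 1|
        = |∑ S : Finset (Fin m),
            ((∑ x : Fin t → ZMod N, ∏ i ∈ S,
              ν (∑ j, (L i j : ZMod N) * x j + b i)) / (N:ℝ)^t - 1)| / 2 ^ m := by
          rw [key, abs_div]
          norm_num
      _ ≤ (∑ S : Finset (Fin m), ε) / 2 ^ m := by
          gcongr
          · exact (Finset.abs_sum_le_sum_abs _ _).trans (Finset.sum_le_sum fun S _ => hS S)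
      _ ≤ ε := by
          rw [Finset.sum_const, Finset.card_univ, Fintype.card_finset, Fintype.card_fin,
            nsmul_eq_mul]
          push_cast
          exact le_of_eq (by field_simp)
  · intro hC
    show CorrelationCondition N (fun x => (ν x + 1) / 2) m₀ _
    intro m hm1 hmm₀
    have hm₀2 : 2 ≤ m₀ := le_trans hm1 hmm₀
    classical
    set τd : ℕ → ZMod N → ℝ := fun s =>
      if h : 1 < s ∧ s ≤ m₀ then (hC s h.1 h.2).choose else fun _ => 0 with hτd
    have hτspec : ∀ s, 1 < s → s ≤ m₀ →
        ((∀ x, 0 ≤ τd s x) ∧ (∀ q : ℕ, 1 ≤ q → avgZ N (fun x => τd s x ^ q) ≤ M q) ∧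
          ∀ h : Fin s → ZMod N,
            avgZ N (fun x => ∏ i : Fin s, ν (x + h i)) ≤
              ∑ i : Fin s, ∑ j : Fin s, if i < j then τd s (h i - h j) else 0) := by
      intro s hs1 hs2
      have hspec := (hC s hs1 hs2).choose_spec
      have : τd s = (hC s hs1 hs2).choose := by
        rw [hτd]; exact dif_pos ⟨hs1, hs2⟩
      rw [this]
      exact hspec
    have hτnn : ∀ s x, 0 ≤ τd s x := by
      intro s x
      by_cases h : 1 < s ∧ s ≤ m₀
      · exact (hτspec s h.1 h.2).1 x
      · simp only [hτd, dif_neg h]; exact le_refl 0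
    set A : ℝ := max (M 1) 1 with hA
    have hA1 : (1:ℝ) ≤ A := le_max_right _ _
    have hA0 : (0:ℝ) ≤ A := zero_le_one.trans hA1
    set C : ℝ := ((m₀:ℝ)+1) * A with hC'
    have hC0 : (0:ℝ) ≤ C := by positivity
    set σ : ZMod N → ℝ := fun x => ∑ s ∈ Icc 2 m₀, τd s x with hσ
    have hσ0 : ∀ x, 0 ≤ σ x := fun x => Finset.sum_nonneg fun s _ => hτnn s x
    have hτ2 := hτspec 2 one_lt_two hm₀2
    have hN : (0:ℝ) < N := by exact_mod_cast Nat.pos_of_ne_zero (NeZero.ne N)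
    -- the average of ν is at most A
    have havgν : avgZ N ν ≤ A := by
      have hν2 : ∀ d : ZMod N, ∑ x : ZMod N, ν x * ν (x - d) ≤ N * τd 2 d := by
        intro d
        have := hτ2.2.2 ![0, -d]
        have h1 : (fun x => ∏ i : Fin 2, ν (x + ![0, -d] i)) = fun x => ν x * ν (x - d) := by
          funext x
          rw [Fin.prod_univ_two]
          simp [sub_eq_add_neg]
        have h2 : (∑ i : Fin 2, ∑ j : Fin 2, if i < j then τd 2 (![0, -d] i - ![0, -d] j) else 0)
            = τd 2 d := by
          rw [Fin.sum_univ_two, Fin.sum_univ_two]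
          norm_num
        rw [h1, h2] at this
        rw [avgZ, div_le_iff₀ hN] at this
        linarith [this]
      have hsumν : (∑ x : ZMod N, ν x)^2 ≤ N * ∑ d : ZMod N, τd 2 d := by
        calc (∑ x : ZMod N, ν x)^2 = ∑ x : ZMod N, ∑ d : ZMod N, ν x * ν (x - d) := by
              rw [sq, Finset.sum_mul_sum]
              refine Finset.sum_congr rfl fun x _ => ?_
              exact (Equiv.sum_comp (Equiv.subLeft x) fun y => ν x * ν y).symm
          _ = ∑ d : ZMod N, ∑ x : ZMod N, ν x * ν (x - d) := Finset.sum_comm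
          _ ≤ ∑ d : ZMod N, (N:ℝ) * τd 2 d := Finset.sum_le_sum fun d _ => hν2 d
          _ = N * ∑ d : ZMod N, τd 2 d := by rw [Finset.mul_sum]
      have h1 : (avgZ N ν)^2 ≤ M 1 := by
        have hm1' := hτ2.2.1 1 le_rfl
        simp only [pow_one] at hm1'
        calc (avgZ N ν)^2 = (∑ x : ZMod N, ν x)^2 / (N:ℝ)^2 := by rw [avgZ, div_pow]
          _ ≤ ((N:ℝ) * ∑ d : ZMod N, τd 2 d) / (N:ℝ)^2 := by
              apply (div_le_div_iff_of_pos_right (by positivity)).mpr hsumν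
          _ = avgZ N (fun x => τd 2 x) := by rw [avgZ]; field_simp
          _ ≤ M 1 := hm1'
      have h0 : 0 ≤ avgZ N ν := avgZ_nonneg hν
      rcases le_or_gt (avgZ N ν) 1 with hle | hgt
      · exact hle.trans hA1
      · have : avgZ N ν ≤ (avgZ N ν)^2 := by nlinarith
        exact this.trans (h1.trans (le_max_left _ _))
    refine ⟨fun x => σ x + C, fun x => add_nonneg (hσ0 x) hC0, ?_, ?_⟩
    · -- moments
      intro q hq
      obtain ⟨n, rfl⟩ : ∃ n, q = n + 1 := ⟨q - 1, (Nat.succ_pred_eq_of_pos hq).symm⟩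
      set g : ℕ → ZMod N → ℝ := fun s => if s ≤ m₀ then τd s else fun _ => C with hg
      have hg0 : ∀ s x, 0 ≤ g s x := by
        intro s x
        by_cases h : s ≤ m₀ <;> simp only [hg, h, if_true, if_false] <;> [exact hτnn s x; exact hC0]
      have hsplit : ∀ x, σ x + C = ∑ s ∈ Icc 2 (m₀+1), g s x := by
        intro x
        rw [Finset.sum_Icc_succ_top (by omega)]
        have h1 : g (m₀+1) x = C := by simp [hg]
        have h2 : ∑ s ∈ Icc 2 m₀, g s x = σ x := by
          refine Finset.sum_congr rfl fun s hs => ?_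
          have : s ≤ m₀ := (Finset.mem_Icc.mp hs).2
          simp [hg, this]
        rw [h1, h2]
      have hcard : (Icc 2 (m₀+1)).card = m₀ := by
        rw [Nat.card_Icc]; omega
      have hpow : ∀ x : ZMod N, (σ x + C)^(n+1) ≤
          (m₀:ℝ)^n * ∑ s ∈ Icc 2 (m₀+1), g s x ^ (n+1) := by
        intro x
        rw [hsplit x]
        have := pow_sum_le_card_mul_sum_pow (s := Icc 2 (m₀+1)) (f := fun s => g s x)
          (fun s _ => hg0 s x) n
        rwa [hcard] at this
      have hMq0 : 0 ≤ M (n+1) :=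
        le_trans (avgZ_nonneg fun x => pow_nonneg (hτnn 2 x) _)
          (hτ2.2.1 (n+1) (Nat.succ_le_succ n.zero_le))
      calc avgZ N (fun x => (σ x + C)^(n+1))
          ≤ avgZ N (fun x => (m₀:ℝ)^n * ∑ s ∈ Icc 2 (m₀+1), g s x ^ (n+1)) := avgZ_mono hpow
        _ = (m₀:ℝ)^n * ∑ s ∈ Icc 2 (m₀+1), avgZ N (fun x => g s x ^ (n+1)) := by
            rw [avgZ_const_mul, avgZ_sum]
        _ ≤ (m₀:ℝ)^n * ((m₀:ℝ) * M (n+1) + C^(n+1)) := by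
            apply mul_le_mul_of_nonneg_left _ (by positivity)
            rw [Finset.sum_Icc_succ_top (by omega)]
            have h1 : avgZ N (fun x => g (m₀+1) x ^ (n+1)) = C^(n+1) := by
              simp only [hg, Nat.not_succ_le_self m₀, if_false]
              exact avgZ_const _
            rw [h1]
            refine add_le_add ?_ le_rfl
            calc ∑ s ∈ Icc 2 m₀, avgZ N (fun x => g s x ^ (n+1))
                ≤ ∑ s ∈ Icc 2 m₀, M (n+1) := by
                  refine Finset.sum_le_sum fun s hs => ?_
                  obtain ⟨hs1, hs2⟩ := Finset.mem_Icc.mp hs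
                  have : g s = τd s := by simp [hg, hs2]
                  rw [this]
                  exact (hτspec s (by omega) hs2).2.1 (n+1) (Nat.succ_le_succ n.zero_le)
              _ = (((Icc 2 m₀).card : ℕ) : ℝ) * M (n+1) := by
                  rw [Finset.sum_const, nsmul_eq_mul]
              _ ≤ (m₀:ℝ) * M (n+1) := by
                  apply mul_le_mul_of_nonneg_right _ hMq0
                  have hcc : (Icc 2 m₀).card ≤ m₀ := by rw [Nat.card_Icc]; omega
                  exact_mod_cast hcc
        _ ≤ ((m₀:ℝ)+1)^(n+1) * ((m₀:ℝ) * M (n+1) + C^(n+1)) := by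
            apply mul_le_mul_of_nonneg_right
            · have h0 : (0:ℝ) ≤ (m₀:ℝ) := Nat.cast_nonneg m₀
              calc (m₀:ℝ)^n ≤ ((m₀:ℝ)+1)^n := by gcongr <;> linarith
                _ ≤ ((m₀:ℝ)+1)^(n+1) := pow_le_pow_right₀ (by linarith) (by omega)
            · positivity
    · -- correlation bound
      intro h
      set P : ℝ := ∑ i : Fin m, ∑ j : Fin m, if i < j then σ (h i - h j) else 0 with hPdef
      have hP0 : 0 ≤ P :=
        Finset.sum_nonneg fun i _ => Finset.sum_nonneg fun j _ => by
          split <;> [exact hσ0 _; exact le_refl 0]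
      -- expansion
      have hexp : avgZ N (fun x => ∏ i : Fin m, ((ν (x + h i) + 1) / 2))
          = (∑ S : Finset (Fin m), avgZ N (fun x => ∏ i ∈ S, ν (x + h i))) / 2^m := by
        have hfun : (fun x => ∏ i : Fin m, ((ν (x + h i) + 1) / 2))
            = fun x => (∑ S : Finset (Fin m), ∏ i ∈ S, ν (x + h i)) / 2^m := by
          funext x; exact prod_half_expand m _
        rw [hfun, avgZ_div_const, avgZ_sum]
      -- per-subset bound
      have hBS : ∀ S : Finset (Fin m), avgZ N (fun x => ∏ i ∈ S, ν (x + h i)) ≤ A + P := by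
        intro S
        rcases Nat.lt_or_ge S.card 2 with hc | hc
        · have : S.card = 0 ∨ S.card = 1 := by omega
          rcases this with hcc | hcc
          · have hSe : S = ∅ := Finset.card_eq_zero.mp hcc
            subst hSe
            simp only [Finset.prod_empty]
            rw [avgZ_const]
            linarith
          · obtain ⟨i, rfl⟩ := Finset.card_eq_one.mp hcc
            simp only [Finset.prod_singleton]
            rw [avgZ_shift]
            linarith [havgν]
        · -- card ≥ 2
          have hsm : S.card ≤ m := by simpa using Finset.card_le_card (Finset.subset_univ S)
          set e := S.orderIsoOfFin rfl with he
          have hb := (hτspec S.card (by omega) (hsm.trans hmm₀)).2.2 (fun i' => h (e i'))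
          have hre : (fun x => ∏ i ∈ S, ν (x + h i))
              = fun x => ∏ i' : Fin S.card, ν (x + h (e i')) := by
            funext x
            exact subset_prod_reindex S _
          rw [hre]
          refine le_trans hb (le_trans ?_ (by linarith : P ≤ A + P))
          -- double sum over Fin S.card pairs ≤ P
          rw [hPdef, ← Finset.sum_product', ← Finset.sum_product']
          set F : Fin S.card × Fin S.card → Fin m × Fin m := fun p => (↑(e p.1), ↑(e p.2)) with hF
          have hinj : ∀ p ∈ (univ ×ˢ univ : Finset (Fin S.card × Fin S.card)),
              ∀ p' ∈ (univ ×ˢ univ : Finset (Fin S.card × Fin S.card)), F p = F p' → p = p' := by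
            intro p _ p' _ hpp
            have h1 : (↑(e p.1) : Fin m) = ↑(e p'.1) := congrArg Prod.fst hpp
            have h2 : (↑(e p.2) : Fin m) = ↑(e p'.2) := congrArg Prod.snd hpp
            exact Prod.ext (e.injective (Subtype.ext h1)) (e.injective (Subtype.ext h2))
          calc ∑ p ∈ (univ ×ˢ univ : Finset (Fin S.card × Fin S.card)),
                (if p.1 < p.2 then τd S.card (h (e p.1) - h (e p.2)) else 0)
              ≤ ∑ p ∈ (univ ×ˢ univ : Finset (Fin S.card × Fin S.card)),
                (if (F p).1 < (F p).2 then σ (h (F p).1 - h (F p).2) else 0) := by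
                refine Finset.sum_le_sum fun p _ => ?_
                by_cases hlt : p.1 < p.2
                · have hlt' : (F p).1 < (F p).2 :=
                    Subtype.coe_lt_coe.mpr (e.lt_iff_lt.mpr hlt)
                  rw [if_pos hlt, if_pos hlt']
                  show τd S.card _ ≤ ∑ s ∈ Icc 2 m₀, τd s _
                  refine Finset.single_le_sum (fun s _ => hτnn s _) ?_
                  exact Finset.mem_Icc.mpr ⟨hc, hsm.trans hmm₀⟩
                · rw [if_neg hlt]
                  split <;> [exact hσ0 _; exact le_refl 0]
            _ = ∑ p ∈ Finset.image F (univ ×ˢ univ),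
                (if p.1 < p.2 then σ (h p.1 - h p.2) else 0) :=
                (Finset.sum_image
                  (f := fun p : Fin m × Fin m => if p.1 < p.2 then σ (h p.1 - h p.2) else 0)
                  hinj).symm
            _ ≤ ∑ p ∈ (univ ×ˢ univ : Finset (Fin m × Fin m)),
                (if p.1 < p.2 then σ (h p.1 - h p.2) else 0) := by
                refine Finset.sum_le_sum_of_subset_of_nonneg ?_ (fun p _ _ => ?_)
                · intro p _
                  exact Finset.mem_product.mpr ⟨Finset.mem_univ _, Finset.mem_univ _⟩
                · split <;> [exact hσ0 _; exact le_refl 0]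
      -- assemble
      have hcard2 : ((Finset.univ : Finset (Finset (Fin m))).card : ℝ) = 2^m := by
        rw [Finset.card_univ, Fintype.card_finset, Fintype.card_fin]
        push_cast
        ring
      have hCpart : A ≤ ∑ i : Fin m, ∑ j : Fin m, (if i < j then C else 0) := by
        rw [← Finset.sum_product']
        have hmem : ((⟨0, by omega⟩ : Fin m), (⟨1, by omega⟩ : Fin m)) ∈
            (univ ×ˢ univ : Finset (Fin m × Fin m)) :=
          Finset.mem_product.mpr ⟨Finset.mem_univ _, Finset.mem_univ _⟩
        have hsingle := Finset.single_le_sum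
          (f := fun p : Fin m × Fin m => if p.1 < p.2 then C else 0)
          (fun p _ => by split <;> [exact hC0; exact le_refl 0]) hmem
        have hlt : (⟨0, by omega⟩ : Fin m) < (⟨1, by omega⟩ : Fin m) := by
          simp [Fin.mk_lt_mk]
        dsimp only at hsingle
        rw [if_pos hlt] at hsingle
        refine le_trans ?_ hsingle
        calc A = 1 * A := (one_mul A).symm
          _ ≤ ((m₀:ℝ)+1) * A := by
              apply mul_le_mul_of_nonneg_right _ hA0
              have : (0:ℝ) ≤ m₀ := Nat.cast_nonneg m₀
              linarith
      calc avgZ N (fun x => ∏ i : Fin m, ((ν (x + h i) + 1) / 2))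
          = (∑ S : Finset (Fin m), avgZ N (fun x => ∏ i ∈ S, ν (x + h i))) / 2^m := hexp
        _ ≤ (∑ _S : Finset (Fin m), (A + P)) / 2^m := by
            apply (div_le_div_iff_of_pos_right (by positivity : (0:ℝ) < 2^m)).mpr
            exact Finset.sum_le_sum fun S _ => hBS S
        _ = A + P := by
            rw [Finset.sum_const, nsmul_eq_mul, hcard2]
            field_simp
        _ ≤ P + ∑ i : Fin m, ∑ j : Fin m, (if i < j then C else 0) := by linarith [hCpart]
        _ = ∑ i : Fin m, ∑ j : Fin m, (if i < j then σ (h i - h j) + C else 0) := by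
            rw [hPdef, ← Finset.sum_add_distrib]
            refine Finset.sum_congr rfl fun i _ => ?_
            rw [← Finset.sum_add_distrib]
            refine Finset.sum_congr rfl fun j _ => ?_
            split <;> simp
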